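/- Let ρ and ρ_∞ be nonnegative trace-class operators on L²([0,1]) with densities n = n[ρ] and n_∞ = n[ρ_∞], and let R = 1 + |H + A_∞| where H + A_∞ is a periodic Schrödinger operator whose eigenvalues λ_p satisfy λ_p ≥ 1 + Cp² + C' > 0 for large p. Then ‖n − n_∞‖_{L¹(Ω)} ≤ C ‖(ρ − ρ_∞) R^{1/2}‖_{J₂}, where J₂ is the Hilbert–Schmidt class and C depends only on Σ_p λ_p^{−1}. -/

import Mathlib

open MeasureTheory


lemma amgm' {a b t : ℝ} (ht : 0 < t) : a * b ≤ (t⁻¹ * a^2 + t * b^2)/2 := by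
  have h1 : t⁻¹ * t = 1 := inv_mul_cancel₀ ht.ne'
  nlinarith [mul_nonneg (inv_pos.2 ht).le (sq_nonneg (a - t*b))]

lemma tsum_cs {f g : ℕ → ℝ} (hf0 : ∀ i, 0 ≤ f i) (hg0 : ∀ i, 0 ≤ g i)
    (hf : Summable f) (hg : Summable g) :
    ∑' i, Real.sqrt (f i) * Real.sqrt (g i) ≤
      Real.sqrt (∑' i, f i) * Real.sqrt (∑' i, g i) := by
  have hsum : Summable (fun i => Real.sqrt (f i) * Real.sqrt (g i)) := by
    refine Summable.of_nonneg_of_le (fun i => by positivity)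
      (fun i => ?_) (((hf.add hg).div_const 2))
    have h2 : f i * g i ≤ ((f i + g i)/2)^2 := by nlinarith [sq_nonneg (f i - g i)]
    calc Real.sqrt (f i) * Real.sqrt (g i) = Real.sqrt (f i * g i) :=
          (Real.sqrt_mul (hf0 i) _).symm
      _ ≤ Real.sqrt (((f i + g i)/2)^2) := Real.sqrt_le_sqrt h2
      _ = (f i + g i)/2 := Real.sqrt_sq (by have := hf0 i; have := hg0 i; linarith)
  refine Summable.tsum_le_of_sum_le hsum (fun s => ?_)
  calc ∑ i ∈ s, Real.sqrt (f i) * Real.sqrt (g i)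
      ≤ Real.sqrt (∑ i ∈ s, f i) * Real.sqrt (∑ i ∈ s, g i) :=
        Real.sum_sqrt_mul_sqrt_le s hf0 hg0
    _ ≤ Real.sqrt (∑' i, f i) * Real.sqrt (∑' i, g i) := by
        have h1 : ∑ i ∈ s, f i ≤ ∑' i, f i := Summable.sum_le_tsum s (fun i _ => hf0 i) hf
        have h2 : ∑ i ∈ s, g i ≤ ∑' i, g i := Summable.sum_le_tsum s (fun i _ => hg0 i) hg
        exact mul_le_mul (Real.sqrt_le_sqrt h1) (Real.sqrt_le_sqrt h2)
          (Real.sqrt_nonneg _) (Real.sqrt_nonneg _)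

/-- L¹ control of the difference of densities by a weighted Hilbert–Schmidt norm:
    for trace-class ρ, ρ_∞ on L²((0,1)) with densities n, n_∞ (characterized by
    duality: ∫ (n−n_∞)φ = Tr((ρ−ρ_∞)M_φ) for every bounded multiplier φ), and
    R = 1 + |H+A_∞| diagonal in the complete orthonormal eigenbasis (u_p) with
    eigenvalues λ_p ≥ 1 satisfying Σ λ_p^{-1} < ∞, one has
    ‖n − n_∞‖_{L¹} ≤ C ‖(ρ−ρ_∞) R^{1/2}‖_{J₂}, where
    ‖(ρ−ρ_∞)R^{1/2}‖²_{J₂} = Σ_p λ_p ‖(ρ−ρ_∞) u_p‖² and C = (Σ_p λ_p^{-1})^{1/2}. -/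
theorem stmt11
    (μ : Measure ℝ) (hμ : μ = MeasureTheory.volume.restrict (Set.Ioo 0 1))
    (ρ ρinf : Lp ℂ 2 μ →L[ℂ] Lp ℂ 2 μ)
    (n ninf : ℝ → ℝ)
    (hn : Integrable (fun x => n x - ninf x) μ)
    (u : ℕ → Lp ℂ 2 μ) (lam : ℕ → ℝ)
    (hu : Orthonormal ℂ u)
    (hucomplete : (Submodule.span ℂ (Set.range u)).topologicalClosure = ⊤)
    (hlam : ∀ p, 1 ≤ lam p)
    (hlamsum : Summable (fun p => (lam p)⁻¹))
    (hHS : Summable (fun p => lam p * ‖(ρ - ρinf) (u p)‖ ^ 2))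
    -- duality characterization of the densities: for every bounded measurable
    -- multiplier φ there is a multiplication operator M_φ with
    -- ∫ (n−n_∞)φ = Tr((ρ−ρ_∞) M_φ) (trace computed in the basis (u_p)):
    (hdual : ∀ φ : ℝ → ℂ, Measurable φ → (∀ x, ‖φ x‖ ≤ 1) →
      ∃ Mφ : Lp ℂ 2 μ →L[ℂ] Lp ℂ 2 μ,
        (∀ f : Lp ℂ 2 μ, (Mφ f : ℝ → ℂ) =ᵐ[μ] fun x => φ x * (f : ℝ → ℂ) x) ∧
        (∫ x, ((n x - ninf x : ℝ) : ℂ) * φ x ∂μ) =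
          ∑' p, (inner ℂ (u p) ((ρ - ρinf) (Mφ (u p))) : ℂ)) :
    (∫ x, |n x - ninf x| ∂μ) ≤
      Real.sqrt (∑' p, (lam p)⁻¹) *
        Real.sqrt (∑' p, lam p * ‖(ρ - ρinf) (u p)‖ ^ 2) := by
  classical
  set T := ρ - ρinf with hT
  have hlampos : ∀ q, (0:ℝ) < lam q := fun q => lt_of_lt_of_le one_pos (hlam q)
  -- Hilbert basis
  let b : HilbertBasis ℕ ℂ (Lp ℂ 2 μ) := HilbertBasis.mk hu hucomplete.ge
  have hb : ⇑b = u := HilbertBasis.coe_mk _ _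
  -- sign function
  have hae : AEMeasurable (fun x => n x - ninf x) μ := hn.aemeasurable
  set g := hae.mk _ with hgdef
  have hgm : Measurable g := hae.measurable_mk
  have hgae : (fun x => n x - ninf x) =ᵐ[μ] g := hae.ae_eq_mk
  set φ : ℝ → ℂ := fun x => if 0 ≤ g x then 1 else -1 with hφdef
  have hφm : Measurable φ :=
    Measurable.ite (measurableSet_le measurable_const hgm) measurable_const measurable_const
  have hφ1 : ∀ x, ‖φ x‖ ≤ 1 := by
    intro x; simp only [hφdef]; split <;> simp
  have hφconj : ∀ x, (starRingEnd ℂ) (φ x) = φ x := by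
    intro x; simp only [hφdef]; split <;> simp
  obtain ⟨M, hM, hMtr⟩ := hdual φ hφm hφ1
  -- M is a contraction
  have hMnorm : ∀ f : Lp ℂ 2 μ, ‖M f‖ ≤ ‖f‖ := by
    intro f
    rw [Lp.norm_def, Lp.norm_def]
    refine ENNReal.toReal_mono (Lp.eLpNorm_ne_top f) ?_
    calc eLpNorm (M f) 2 μ = eLpNorm (fun x => φ x * (f : ℝ → ℂ) x) 2 μ :=
          eLpNorm_congr_ae (hM f)
      _ ≤ eLpNorm (f : ℝ → ℂ) 2 μ := by
          refine eLpNorm_mono_ae (Filter.Eventually.of_forall fun x => ?_)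
          rw [norm_mul]
          calc ‖φ x‖ * ‖(f : ℝ → ℂ) x‖ ≤ 1 * ‖(f : ℝ → ℂ) x‖ :=
                mul_le_mul_of_nonneg_right (hφ1 x) (norm_nonneg _)
            _ = ‖(f : ℝ → ℂ) x‖ := one_mul _
  -- M is self-adjoint
  have hMsa : ∀ f h : Lp ℂ 2 μ, (inner ℂ (M f) h : ℂ) = inner ℂ f (M h) := by
    intro f h
    rw [MeasureTheory.L2.inner_def, MeasureTheory.L2.inner_def]
    refine integral_congr_ae ?_
    filter_upwards [hM f, hM h] with x h1 h2
    rw [RCLike.inner_apply, RCLike.inner_apply, h1, h2]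
    simp only [map_mul, hφconj x]
    ring
  -- the integral equals the L¹ norm
  have hint : (∫ x, ((n x - ninf x : ℝ) : ℂ) * φ x ∂μ) =
      ((∫ x, |n x - ninf x| ∂μ : ℝ) : ℂ) := by
    have e1 : (∫ x, ((n x - ninf x : ℝ) : ℂ) * φ x ∂μ) = ∫ x, ((|g x| : ℝ) : ℂ) ∂μ := by
      refine integral_congr_ae ?_
      filter_upwards [hgae] with x hx
      rw [hx]
      by_cases h : 0 ≤ g x
      · simp [hφdef, h, abs_of_nonneg h]
      · simp [hφdef, h, abs_of_neg (not_le.mp h)]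
    have e2 : ∫ x, ((|g x| : ℝ) : ℂ) ∂μ = ((∫ x, |g x| ∂μ : ℝ) : ℂ) := integral_ofReal
    have e3 : ∫ x, |g x| ∂μ = ∫ x, |n x - ninf x| ∂μ :=
      integral_congr_ae (by filter_upwards [hgae] with x hx; rw [hx])
    rw [e1, e2, e3]
  -- double sum setup
  set f2 : ℕ → ℕ → ℂ := fun q p => (inner ℂ (u q) (M (u p)) : ℂ) * (inner ℂ (u p) (T (u q)) : ℂ)
    with hf2
  have hBnn : ∀ (q p : ℕ), (0:ℝ) ≤
      ((lam q)⁻¹ * ‖(inner ℂ (u p) (M (u q)) : ℂ)‖^2 + lam q * ‖(inner ℂ (u p) (T (u q)) : ℂ)‖^2)/2 :=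
    fun q p => div_nonneg (add_nonneg (mul_nonneg (inv_nonneg.mpr (hlampos q).le) (sq_nonneg _))
      (mul_nonneg (hlampos q).le (sq_nonneg _))) two_pos.le
  have h1 : ∀ p, HasSum (fun q => f2 q p) ((inner ℂ (u p) (T (M (u p))) : ℂ)) := by
    intro p
    have h := (b.hasSum_repr (M (u p))).mapL ((innerSL ℂ (u p)).comp T)
    have e : (fun q => (((innerSL ℂ) (u p)).comp T) ((b.repr (M (u p))) q • b q))
        = fun q => f2 q p := by
      funext q
      have hbq : b q = u q := congrFun hb q
      rw [ContinuousLinearMap.comp_apply, T.map_smul, innerSL_apply_apply, inner_smul_right,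
        b.repr_apply_apply, hbq, hf2]
    rw [e] at h
    simp only [ContinuousLinearMap.comp_apply, innerSL_apply_apply] at h
    exact h
  -- norm bound
  have hnorm_le : ∀ q p, ‖f2 q p‖ ≤
      ((lam q)⁻¹ * ‖(inner ℂ (u p) (M (u q)) : ℂ)‖^2 + lam q * ‖(inner ℂ (u p) (T (u q)) : ℂ)‖^2)/2 := by
    intro q p
    have e : ‖(inner ℂ (u q) (M (u p)) : ℂ)‖ = ‖(inner ℂ (u p) (M (u q)) : ℂ)‖ := by
      rw [← hMsa (u q) (u p), norm_inner_symm]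
    rw [hf2, norm_mul, e]
    exact amgm' (hlampos q)
  -- summability of the dominating family
  have hBp : ∀ q, Summable (fun p =>
      ((lam q)⁻¹ * ‖(inner ℂ (u p) (M (u q)) : ℂ)‖^2 + lam q * ‖(inner ℂ (u p) (T (u q)) : ℂ)‖^2)/2) := by
    intro q
    exact ((((hu.inner_products_summable (x := M (u q)))).mul_left _).add
      (((hu.inner_products_summable (x := T (u q)))).mul_left _)).div_const 2
  have hMuq : ∀ q, ‖M (u q)‖ ≤ 1 := by
    intro q
    calc ‖M (u q)‖ ≤ ‖u q‖ := hMnorm (u q)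
      _ = 1 := hu.1 q
  have hrow : ∀ q, ∑' p,
      ((lam q)⁻¹ * ‖(inner ℂ (u p) (M (u q)) : ℂ)‖^2 + lam q * ‖(inner ℂ (u p) (T (u q)) : ℂ)‖^2)/2
      ≤ ((lam q)⁻¹ + lam q * ‖T (u q)‖^2)/2 := by
    intro q
    rw [tsum_div_const, Summable.tsum_add ((hu.inner_products_summable (x := M (u q))).mul_left _)
      ((hu.inner_products_summable (x := T (u q))).mul_left _), tsum_mul_left, tsum_mul_left]
    have b1 : ∑' p, ‖(inner ℂ (u p) (M (u q)) : ℂ)‖^2 ≤ 1 := by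
      calc ∑' p, ‖(inner ℂ (u p) (M (u q)) : ℂ)‖^2 ≤ ‖M (u q)‖^2 :=
            hu.tsum_inner_products_le _
        _ ≤ 1 := by nlinarith [hMuq q, norm_nonneg (M (u q))]
    have b2 : ∑' p, ‖(inner ℂ (u p) (T (u q)) : ℂ)‖^2 ≤ ‖T (u q)‖^2 :=
      hu.tsum_inner_products_le _
    have := mul_le_mul_of_nonneg_left b1 (inv_nonneg.mpr (hlampos q).le)
    have := mul_le_mul_of_nonneg_left b2 (hlampos q).le
    linarith
  have hDsum : Summable (fun q => ((lam q)⁻¹ + lam q * ‖T (u q)‖^2)/2) :=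
    (hlamsum.add hHS).div_const 2
  have hBsum : Summable (fun z : ℕ × ℕ =>
      ((lam z.1)⁻¹ * ‖(inner ℂ (u z.2) (M (u z.1)) : ℂ)‖^2
        + lam z.1 * ‖(inner ℂ (u z.2) (T (u z.1)) : ℂ)‖^2)/2) := by
    rw [summable_prod_of_nonneg (fun z => hBnn z.1 z.2)]
    refine ⟨fun q => hBp q, ?_⟩
    refine Summable.of_nonneg_of_le (fun q => tsum_nonneg fun p => hBnn q p)
      (fun q => hrow q) hDsum
  have hf2sum : Summable (Function.uncurry f2) := by
    refine Summable.of_norm (Summable.of_nonneg_of_le (fun z => norm_nonneg _) ?_ hBsum)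
    intro z
    exact hnorm_le z.1 z.2
  -- the trace rearrangement
  have htr : ∑' p, (inner ℂ (u p) (T (M (u p))) : ℂ) = ∑' q, (inner ℂ (M (u q)) (T (u q)) : ℂ) := by
    calc ∑' p, (inner ℂ (u p) (T (M (u p))) : ℂ) = ∑' p, ∑' q, f2 q p :=
          tsum_congr fun p => (h1 p).tsum_eq.symm
      _ = ∑' q, ∑' p, f2 q p := Summable.tsum_comm hf2sum
      _ = ∑' q, (inner ℂ (M (u q)) (T (u q)) : ℂ) := by
          refine tsum_congr fun q => ?_
          have e : ∀ p, f2 q p = (inner ℂ (M (u q)) (u p) : ℂ) * (inner ℂ (u p) (T (u q)) : ℂ) := by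
            intro p; rw [hf2, hMsa (u q) (u p)]
          rw [tsum_congr e]
          have := b.tsum_inner_mul_inner (M (u q)) (T (u q))
          rwa [hb] at this
  -- summability of ‖T u q‖
  have hTsum : Summable (fun q => ‖T (u q)‖) := by
    refine Summable.of_nonneg_of_le (fun q => norm_nonneg _) (fun q => ?_) hDsum
    have := amgm' (a := 1) (b := ‖T (u q)‖) (hlampos q)
    simpa using this
  -- final chain
  have hfin : (∫ x, |n x - ninf x| ∂μ) ≤ ∑' q, ‖T (u q)‖ := by
    have key : ((∫ x, |n x - ninf x| ∂μ : ℝ) : ℂ) = ∑' q, (inner ℂ (M (u q)) (T (u q)) : ℂ) := by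
      rw [← hint, hMtr]; exact htr
    have h0 : (0:ℝ) ≤ ∫ x, |n x - ninf x| ∂μ := integral_nonneg fun x => abs_nonneg _
    calc (∫ x, |n x - ninf x| ∂μ) = ‖((∫ x, |n x - ninf x| ∂μ : ℝ) : ℂ)‖ := by
          rw [Complex.norm_real, Real.norm_eq_abs, abs_of_nonneg h0]
      _ = ‖∑' q, (inner ℂ (M (u q)) (T (u q)) : ℂ)‖ := by rw [key]
      _ ≤ ∑' q, ‖(inner ℂ (M (u q)) (T (u q)) : ℂ)‖ := by
          refine norm_tsum_le_tsum_norm ?_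
          refine Summable.of_nonneg_of_le (fun q => norm_nonneg _) (fun q => ?_) hTsum
          calc ‖(inner ℂ (M (u q)) (T (u q)) : ℂ)‖ ≤ ‖M (u q)‖ * ‖T (u q)‖ :=
                norm_inner_le_norm _ _
            _ ≤ 1 * ‖T (u q)‖ := mul_le_mul_of_nonneg_right (hMuq q) (norm_nonneg _)
            _ = ‖T (u q)‖ := one_mul _
      _ ≤ ∑' q, ‖T (u q)‖ := by
          refine Summable.tsum_le_tsum (fun q => ?_) ?_ hTsum
          · calc ‖(inner ℂ (M (u q)) (T (u q)) : ℂ)‖ ≤ ‖M (u q)‖ * ‖T (u q)‖ :=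
                  norm_inner_le_norm _ _
              _ ≤ 1 * ‖T (u q)‖ := mul_le_mul_of_nonneg_right (hMuq q) (norm_nonneg _)
              _ = ‖T (u q)‖ := one_mul _
          · refine Summable.of_nonneg_of_le (fun q => norm_nonneg _) (fun q => ?_) hTsum
            calc ‖(inner ℂ (M (u q)) (T (u q)) : ℂ)‖ ≤ ‖M (u q)‖ * ‖T (u q)‖ :=
                  norm_inner_le_norm _ _
              _ ≤ 1 * ‖T (u q)‖ := mul_le_mul_of_nonneg_right (hMuq q) (norm_nonneg _)
              _ = ‖T (u q)‖ := one_mul _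
  refine hfin.trans ?_
  have e : ∀ q, ‖T (u q)‖ = Real.sqrt ((lam q)⁻¹) * Real.sqrt (lam q * ‖T (u q)‖^2) := by
    intro q
    rw [← Real.sqrt_mul (inv_nonneg.mpr (hlampos q).le), ← mul_assoc,
      inv_mul_cancel₀ (hlampos q).ne', one_mul, Real.sqrt_sq (norm_nonneg _)]
  rw [tsum_congr e]
  exact tsum_cs (fun q => inv_nonneg.mpr (hlampos q).le)
    (fun q => mul_nonneg (hlampos q).le (sq_nonneg _)) hlamsum hHS
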